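/- Let V be a standard Borel space and let (X_J)_{J∈𝒥} be a V-valued exchangeable array, realized canonically with law P. Let (j_l)_{l≥1} be a strictly increasing sequence of positive integers with j_0 = 0 and j_l − j_{l−1} ≤ k for all l ≥ 1, and set J_l = {j_{l−1}+1, j_{l−1}+2, …, j_l}. Then the random variables (X_{J_l})_{l=1}^∞ are conditionally independent given the tail σ-algebra 𝒢. -/

import Mathlib

open MeasureTheory Filter Topology
open scoped ENNReal NNReal

noncomputable section

/-- The index set `𝒥`: nonempty subsets of `ℕ` of cardinality at most `k`. -/
abbrev Idx (k : ℕ) := {J : Finset ℕ // J.Nonempty ∧ J.card ≤ k}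

/-- Action of a permutation of `ℕ` on the index set: `J ↦ τ(J)`. -/
def permIdx (k : ℕ) (τ : Equiv.Perm ℕ) (J : Idx k) : Idx k :=
  ⟨J.1.image τ, J.2.1.image τ, by
    rw [Finset.card_image_of_injective _ τ.injective]; exact J.2.2⟩

/-- Action of a permutation on the canonical space `V ^ 𝒥`. -/
def permAct (k : ℕ) (V : Type*) (τ : Equiv.Perm ℕ) (ω : Idx k → V) : Idx k → V :=
  fun J => ω (permIdx k τ J)

/-- Exchangeability of the canonical array. -/
def IsExchangeable (k : ℕ) {V : Type*} [MeasurableSpace V] (P : Measure (Idx k → V)) : Prop :=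
  ∀ τ : Equiv.Perm ℕ, {x | τ x ≠ x}.Finite → Measure.map (permAct k V τ) P = P

/-- The `N`-fold shift `S^N` on the index set: `{γ₁,…,γ_l} ↦ {γ₁+N,…,γ_l+N}`. -/
def shiftIdx (k : ℕ) (N : ℕ) (J : Idx k) : Idx k :=
  ⟨J.1.image (· + N), J.2.1.image _, by
    rw [Finset.card_image_of_injective _ (add_left_injective N)]; exact J.2.2⟩

/-- The σ-algebra `𝒢_N = σ(X_{S^N(J)} : J ∈ 𝒥)`. -/
def tailSigmaN (k : ℕ) (V : Type*) [MeasurableSpace V] (N : ℕ) :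
    MeasurableSpace (Idx k → V) :=
  MeasurableSpace.comap (fun ω : Idx k → V => fun J => ω (shiftIdx k N J)) inferInstance

/-- The tail σ-algebra `𝒢 = ⋂_{N ≥ 1} 𝒢_N`. -/
def tailSigma (k : ℕ) (V : Type*) [MeasurableSpace V] : MeasurableSpace (Idx k → V) :=
  ⨅ N : ℕ, tailSigmaN k V (N + 1)


section AuxLevy

variable {Ω : Type*} {m0 : MeasurableSpace Ω}

lemma my_integrable_of_bdd {P : Measure Ω} [IsFiniteMeasure P] {f : Ω → ℝ} {C : ℝ}
    (hf : AEStronglyMeasurable f P) (h : ∀ᵐ ω ∂P, |f ω| ≤ C) : Integrable f P :=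
  Integrable.mono' (integrable_const C) hf (by simpa [Real.norm_eq_abs] using h)

section Levy

variable (P : Measure Ω) [IsProbabilityMeasure P]
  (m : ℕ → MeasurableSpace Ω) (hle : ∀ N, m N ≤ m0) (hanti : Antitone m)
  {g : Ω → ℝ} (hgm : Measurable g) (hg0 : ∀ ω, 0 ≤ g ω) (hg1 : ∀ ω, g ω ≤ 1)

include hgm hg0 hg1 in
/-- bounds on condexp -/
lemma condexp_bdd01 (m' : MeasurableSpace Ω) (hm' : m' ≤ m0) :
    ∀ᵐ ω ∂P, 0 ≤ (P[g|m']) ω ∧ (P[g|m']) ω ≤ 1 := by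
  have hint : Integrable g P := my_integrable_of_bdd hgm.aestronglyMeasurable
    (ae_of_all _ fun ω => abs_le.2 ⟨by linarith [hg0 ω], hg1 ω⟩)
  have h1 : (P[g|m']) ≤ᵐ[P] (P[(fun _ => (1:ℝ))|m']) :=
    condExp_mono hint (integrable_const 1) (ae_of_all _ hg1)
  have h0 : 0 ≤ᵐ[P] (P[g|m']) := condExp_nonneg (ae_of_all _ hg0)
  rw [condExp_const hm'] at h1
  filter_upwards [h0, h1] with ω a b using ⟨a, b⟩

include hle hgm hg0 hg1 in
lemma levy_pull (N : ℕ) {f' : Ω → ℝ} (hf' : StronglyMeasurable[m N] f')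
    (hbd : ∀ᵐ ω ∂P, |f' ω| ≤ 1) :
    ∫ ω, f' ω * g ω ∂P = ∫ ω, f' ω * (P[g|m N]) ω ∂P := by
  have hint : Integrable g P := my_integrable_of_bdd hgm.aestronglyMeasurable
    (ae_of_all _ fun ω => abs_le.2 ⟨by linarith [hg0 ω], hg1 ω⟩)
  have hf'm0 : AEStronglyMeasurable f' P := (hf'.mono (hle N)).aestronglyMeasurable
  have hfg : Integrable (f' * g) P := by
    refine my_integrable_of_bdd (C := 1) (hf'm0.mul hgm.aestronglyMeasurable) ?_
    filter_upwards [hbd] with ω hω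
    have : |f' ω * g ω| = |f' ω| * |g ω| := abs_mul _ _
    rw [Pi.mul_apply, this]
    exact mul_le_one₀ hω (abs_nonneg _) (abs_le.2 ⟨by linarith [hg0 ω], hg1 ω⟩)
  have h1 : ∫ ω, (f' * g) ω ∂P = ∫ ω, (P[f' * g|m N]) ω ∂P := (integral_condExp (hle N)).symm
  have h2 : P[f' * g|m N] =ᵐ[P] f' * P[g|m N] := condExp_mul_of_stronglyMeasurable_left hf' hfg hint
  calc ∫ ω, f' ω * g ω ∂P = ∫ ω, (P[f' * g|m N]) ω ∂P := h1
    _ = ∫ ω, (f' * P[g|m N]) ω ∂P := integral_congr_ae h2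
    _ = ∫ ω, f' ω * (P[g|m N]) ω ∂P := rfl

include hle hanti hgm hg0 hg1 in
lemma levy_orth {M N : ℕ} (hMN : M ≤ N) :
    ∫ ω, (P[g|m N]) ω * (P[g|m M]) ω ∂P = ∫ ω, (P[g|m N]) ω * (P[g|m N]) ω ∂P := by
  have hb : ∀ᵐ ω ∂P, |(P[g|m N]) ω| ≤ 1 := by
    filter_upwards [condexp_bdd01 P hgm hg0 hg1 (m N) (hle N)] with ω hω
    exact abs_le.2 ⟨by linarith [hω.1], hω.2⟩
  have h1 := levy_pull P m hle hgm hg0 hg1 M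
    (stronglyMeasurable_condExp.mono (hanti hMN)) hb
  have h2 := levy_pull P m hle hgm hg0 hg1 N stronglyMeasurable_condExp hb
  rw [← h1, ← h2]

include hle hanti hgm hg0 hg1 in
theorem levy_downward_L1 :
    Tendsto (fun N => ∫ ω, |(P[g|m N]) ω - (P[g|⨅ M, m M]) ω| ∂P) atTop (𝓝 0) := by
  have hint : Integrable g P := my_integrable_of_bdd hgm.aestronglyMeasurable
    (ae_of_all _ fun ω => abs_le.2 ⟨by linarith [hg0 ω], hg1 ω⟩)
  set gg : ℕ → Ω → ℝ := fun N => P[g|m N] with hgg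
  have hggsm : ∀ N, AEStronglyMeasurable (gg N) P :=
    fun N => (stronglyMeasurable_condExp.mono (hle N)).aestronglyMeasurable
  have hggm : ∀ N, Measurable (gg N) :=
    fun N => (stronglyMeasurable_condExp.mono (hle N)).measurable
  have hggb : ∀ N, ∀ᵐ ω ∂P, |gg N ω| ≤ 1 := by
    intro N
    filter_upwards [condexp_bdd01 P hgm hg0 hg1 (m N) (hle N)] with ω hω
    exact abs_le.2 ⟨by linarith [hω.1], hω.2⟩
  have hprodint : ∀ M N, Integrable (fun ω => gg M ω * gg N ω) P := by
    intro M N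
    refine my_integrable_of_bdd (C := 1) ((hggsm M).mul (hggsm N)) ?_
    filter_upwards [hggb M, hggb N] with ω h1 h2
    rw [abs_mul]
    exact mul_le_one₀ h1 (abs_nonneg _) h2
  set a : ℕ → ℝ := fun N => ∫ ω, gg N ω * gg N ω ∂P with ha
  have horth : ∀ M N, M ≤ N → ∫ ω, gg M ω * gg N ω ∂P = a N := by
    intro M N hMN
    simp_rw [mul_comm (gg M _) (gg N _)]
    exact levy_orth P m hle hanti hgm hg0 hg1 hMN
  have hsq : ∀ M N, M ≤ N → ∫ ω, (gg M ω - gg N ω)^2 ∂P = a M - a N := by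
    intro M N hMN
    have hexp : (fun ω => (gg M ω - gg N ω)^2)
        = fun ω => gg M ω * gg M ω - 2*(gg M ω * gg N ω) + gg N ω * gg N ω := by
      funext ω; ring
    have i1 : Integrable (fun ω => gg M ω * gg M ω - 2*(gg M ω * gg N ω)) P :=
      (hprodint M M).sub ((hprodint M N).const_mul 2)
    have e1 : ∫ ω, (gg M ω * gg M ω - 2*(gg M ω * gg N ω) + gg N ω * gg N ω) ∂P
        = (∫ ω, (gg M ω * gg M ω - 2*(gg M ω * gg N ω)) ∂P) + ∫ ω, gg N ω * gg N ω ∂P :=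
      integral_add i1 (hprodint N N)
    have e2 : ∫ ω, (gg M ω * gg M ω - 2*(gg M ω * gg N ω)) ∂P
        = (∫ ω, gg M ω * gg M ω ∂P) - ∫ ω, 2*(gg M ω * gg N ω) ∂P :=
      integral_sub (hprodint M M) ((hprodint M N).const_mul 2)
    have e3 : ∫ ω, 2*(gg M ω * gg N ω) ∂P = 2 * ∫ ω, gg M ω * gg N ω ∂P :=
      MeasureTheory.integral_const_mul 2 _
    rw [hexp, e1, e2, e3, horth M N hMN]
    show a M - 2 * a N + a N = a M - a N
    ring
  have hanti_a : Antitone a := by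
    intro M N hMN
    have h1 := hsq M N hMN
    have h2 : 0 ≤ ∫ ω, (gg M ω - gg N ω)^2 ∂P := integral_nonneg fun ω => sq_nonneg _
    linarith
  have ha0 : ∀ N, 0 ≤ a N := fun N => integral_nonneg fun ω => mul_self_nonneg _
  obtain ⟨L, hL⟩ : ∃ L, Tendsto a atTop (𝓝 L) :=
    ⟨_, tendsto_atTop_ciInf hanti_a ⟨0, fun x ⟨N, hN⟩ => hN ▸ ha0 N⟩⟩
  have hLle : ∀ N, L ≤ a N := fun N =>
    le_of_tendsto hL (eventually_atTop.2 ⟨N, fun K hK => hanti_a hK⟩)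
  -- L¹ Cauchy property
  have hdiffint : ∀ M N, Integrable (fun ω => |gg M ω - gg N ω|) P := by
    intro M N
    refine my_integrable_of_bdd (C := 2) ((((hggm M).sub (hggm N)).abs).aestronglyMeasurable) ?_
    filter_upwards [hggb M, hggb N] with ω h1 h2
    rw [abs_abs]
    calc |gg M ω - gg N ω| ≤ |gg M ω| + |gg N ω| := abs_sub _ _
      _ ≤ 2 := by linarith
  have hsqint : ∀ M N, Integrable (fun ω => (gg M ω - gg N ω)^2) P := by
    intro M N
    have : (fun ω => (gg M ω - gg N ω)^2)
        = fun ω => gg M ω * gg M ω - 2*(gg M ω * gg N ω) + gg N ω * gg N ω := by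
      funext ω; ring
    rw [this]
    exact ((hprodint M M).sub ((hprodint M N).const_mul 2)).add (hprodint N N)
  have hcauchy : ∀ ε : ℝ, 0 < ε → ∃ N₀, ∀ M N, N₀ ≤ M → N₀ ≤ N →
      ∫ ω, |gg M ω - gg N ω| ∂P ≤ ε := by
    intro ε hε
    obtain ⟨N₀, hN₀⟩ : ∃ N₀, a N₀ < L + ε^2 :=
      (hL.eventually (gt_mem_nhds (by nlinarith [pow_pos hε 2] : L < L + ε^2))).exists
    refine ⟨N₀, ?_⟩
    have haux : ∀ M N, N₀ ≤ M → M ≤ N → ∫ ω, |gg M ω - gg N ω| ∂P ≤ ε := by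
      intro M N h0M hMN
      have hptw : ∀ ω, |gg M ω - gg N ω| ≤ ε/2 + (gg M ω - gg N ω)^2 / (2*ε) := by
        intro ω
        set x := gg M ω - gg N ω with hx
        have h1 : 0 ≤ (|x| - ε)^2 := sq_nonneg _
        have h2 : |x|^2 = x^2 := sq_abs x
        have h3 : 2*ε*|x| ≤ x^2 + ε^2 := by nlinarith
        calc |x| = (2*ε*|x|)/(2*ε) := by field_simp
          _ ≤ (x^2 + ε^2)/(2*ε) := by
              exact (div_le_div_iff_of_pos_right (by linarith)).2 h3
          _ = ε/2 + x^2/(2*ε) := by field_simp; ring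
      have hmono := integral_mono (hdiffint M N)
        (by exact (integrable_const (ε/2)).add ((hsqint M N).div_const (2*ε))) hptw
      have heq : ∫ ω, (ε/2 + (gg M ω - gg N ω)^2 / (2*ε)) ∂P
          = ε/2 + (a M - a N) / (2*ε) := by
        rw [integral_add (integrable_const _) ((hsqint M N).div_const _), integral_const,
          integral_div, hsq M N hMN]
        simp
      rw [heq] at hmono
      have hAMN : a M - a N ≤ ε^2 := by
        have := hanti_a h0M
        have := hLle N
        linarith
      calc ∫ ω, |gg M ω - gg N ω| ∂P ≤ ε/2 + (a M - a N)/(2*ε) := hmono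
        _ ≤ ε/2 + ε^2/(2*ε) := by
            have := (div_le_div_iff_of_pos_right (show (0:ℝ) < 2*ε by linarith)).2 hAMN
            linarith
        _ = ε := by field_simp; ring
    intro M N h0M h0N
    rcases le_total M N with h | h
    · exact haux M N h0M h
    · simp_rw [abs_sub_comm (gg M _) (gg N _)]
      exact haux N M h0N h
  -- subsequence with geometric Cauchy bounds
  choose ψ hψ using fun j : ℕ => hcauchy ((2:ℝ)⁻¹^j) (by positivity)
  set φ : ℕ → ℕ := fun j => j + (Finset.range (j+1)).sup ψ with hφ
  have hφ_ge : ∀ j, j ≤ φ j := fun j => Nat.le_add_right _ _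
  have hφψ : ∀ j, ψ j ≤ φ j := fun j =>
    le_trans (Finset.le_sup (Finset.self_mem_range_succ j)) (Nat.le_add_left _ _)
  have hφmono : Monotone φ := fun i j hij =>
    Nat.add_le_add hij (Finset.sup_mono (Finset.range_subset_range.2 (by omega)))
  have hφbound : ∀ j M N, φ j ≤ M → φ j ≤ N → ∫ ω, |gg M ω - gg N ω| ∂P ≤ (2:ℝ)⁻¹^j :=
    fun j M N hM hN => hψ j M N (le_trans (hφψ j) hM) (le_trans (hφψ j) hN)
  -- a.e. convergence of the subsequence
  set D : ℕ → Ω → ℝ := fun j ω => gg (φ (j+1)) ω - gg (φ j) ω with hD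
  have hDmeas : ∀ j, Measurable (D j) := fun j => (hggm _).sub (hggm _)
  have hDint : ∀ j, Integrable (D j) P := by
    intro j
    refine my_integrable_of_bdd (C := 2) (hDmeas j).aestronglyMeasurable ?_
    filter_upwards [hggb (φ (j+1)), hggb (φ j)] with ω h1 h2
    calc |D j ω| ≤ |gg (φ (j+1)) ω| + |gg (φ j) ω| := abs_sub _ _
      _ ≤ 2 := by linarith
  have hDbound : ∀ j, ∫ ω, |D j ω| ∂P ≤ (2:ℝ)⁻¹^j :=
    fun j => hφbound j (φ (j+1)) (φ j) (hφmono (Nat.le_succ j)) le_rfl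
  have hlintD : ∀ j, ∫⁻ ω, (‖D j ω‖₊ : ℝ≥0∞) ∂P = ENNReal.ofReal (∫ ω, |D j ω| ∂P) := by
    intro j
    rw [← (by simpa only [enorm_eq_nnnorm] using ofReal_integral_norm_eq_lintegral_enorm (hDint j) :
      ENNReal.ofReal (∫ ω, ‖D j ω‖ ∂P) = ∫⁻ ω, (‖D j ω‖₊ : ℝ≥0∞) ∂P)]
    simp [Real.norm_eq_abs]
  have hsum_ne_top : ∑' j, ∫⁻ ω, (‖D j ω‖₊ : ℝ≥0∞) ∂P ≠ ⊤ := by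
    have hb : ∀ j, ∫⁻ ω, (‖D j ω‖₊ : ℝ≥0∞) ∂P ≤ (2:ℝ≥0∞)⁻¹^j := by
      intro j
      rw [hlintD j]
      calc ENNReal.ofReal (∫ ω, |D j ω| ∂P) ≤ ENNReal.ofReal ((2:ℝ)⁻¹^j) :=
            ENNReal.ofReal_le_ofReal (hDbound j)
        _ = (2:ℝ≥0∞)⁻¹^j := by
            rw [ENNReal.ofReal_pow (by norm_num)]
            congr 1
            rw [ENNReal.ofReal_inv_of_pos (by norm_num)]
            norm_num
    refine ne_top_of_le_ne_top ?_ (ENNReal.tsum_le_tsum hb)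
    simp [ENNReal.tsum_geometric, ENNReal.one_sub_inv_two]
  have hae_sum : ∀ᵐ ω ∂P, Summable fun j => ‖D j ω‖₊ := by
    have hmeas : Measurable fun ω => ∑' j, (‖D j ω‖₊ : ℝ≥0∞) :=
      Measurable.ennreal_tsum fun j => (hDmeas j).nnnorm.coe_nnreal_ennreal
    have hlt : ∫⁻ ω, ∑' j, (‖D j ω‖₊ : ℝ≥0∞) ∂P ≠ ⊤ := by
      rw [lintegral_tsum fun j => ((hDmeas j).nnnorm.coe_nnreal_ennreal).aemeasurable]
      exact hsum_ne_top
    filter_upwards [ae_lt_top hmeas hlt] with ω hω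
    exact ENNReal.tsum_coe_ne_top_iff_summable.1 hω.ne
  have hae_cauchy : ∀ᵐ ω ∂P, ∃ x, Tendsto (fun j => gg (φ j) ω) atTop (𝓝 x) := by
    filter_upwards [hae_sum] with ω hω
    have hs : Summable fun j => dist (gg (φ j) ω) (gg (φ (j+1)) ω) := by
      have := NNReal.summable_coe.2 hω
      refine this.congr fun j => ?_
      rw [coe_nnnorm, Real.norm_eq_abs, Real.dist_eq, abs_sub_comm]
    exact cauchySeq_tendsto_of_complete (cauchySeq_of_summable_dist hs)
  set h : Ω → ℝ := fun ω => limsup (fun j => gg (φ j) ω) atTop with hh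
  have hconv_ae : ∀ᵐ ω ∂P, Tendsto (fun j => gg (φ j) ω) atTop (𝓝 (h ω)) := by
    filter_upwards [hae_cauchy] with ω hω
    obtain ⟨x, hx⟩ := hω
    have : h ω = x := hx.limsup_eq
    rw [this]; exact hx
  have hmeas_h : ∀ M, Measurable[m M] h := by
    intro M
    have hrw : h = fun ω => limsup (fun j => gg (φ (j + M)) ω) atTop := by
      funext ω; exact (Filter.limsup_nat_add _ M).symm
    rw [hrw]
    exact Measurable.limsup fun j =>
      (stronglyMeasurable_condExp.mono
        (hanti (le_trans (Nat.le_add_left M j) (hφ_ge (j+M))))).measurable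
  have hble : (⨅ M, m M) ≤ m0 := (iInf_le m 0).trans (hle 0)
  have hbd_h : ∀ᵐ ω ∂P, |h ω| ≤ 1 := by
    filter_upwards [hconv_ae, ae_all_iff.2 fun j => hggb (φ j)] with ω h1 h2
    exact le_of_tendsto ((continuous_abs.tendsto _).comp h1) (Eventually.of_forall h2)
  have hmeas_h0 : Measurable h := (hmeas_h 0).mono (hle 0) le_rfl
  have hint_h : Integrable h P := my_integrable_of_bdd hmeas_h0.aestronglyMeasurable hbd_h
  haveI : SigmaFinite (P.trim hble) := by
    infer_instance
  have hW : h =ᵐ[P] P[g|⨅ M, m M] := by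
    refine ae_eq_condExp_of_forall_setIntegral_eq hble hint
      (fun s _ _ => hint_h.integrableOn) (fun s hs _ => ?_) ?_
    · have hsN : ∀ N, MeasurableSet[m N] s := fun N => (MeasurableSpace.measurableSet_iInf.1 hs) N
      have h1 : ∀ j, ∫ ω in s, gg (φ j) ω ∂P = ∫ ω in s, g ω ∂P :=
        fun j => setIntegral_condExp (hle (φ j)) hint (hsN (φ j))
      have h2 : Tendsto (fun j => ∫ ω in s, gg (φ j) ω ∂P) atTop (𝓝 (∫ ω in s, h ω ∂P)) := by
        refine tendsto_integral_of_dominated_convergence (fun _ => 1)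
          (fun j => (hggsm (φ j)).restrict) (integrable_const 1) (fun j => ?_)
          (ae_restrict_of_ae hconv_ae)
        exact ae_restrict_of_ae ((hggb (φ j)).mono fun ω hω => by
          simpa [Real.norm_eq_abs] using hω)
      simp_rw [h1] at h2
      exact (tendsto_nhds_unique tendsto_const_nhds h2).symm
    · have : Measurable[⨅ M, m M] h := fun t ht => MeasurableSpace.measurableSet_iInf.2 fun M => hmeas_h M ht
      exact (Measurable.stronglyMeasurable this).aestronglyMeasurable
  -- convergence of subsequence to h in L¹
  have hgg_h_int : ∀ N, Integrable (fun ω => |gg N ω - h ω|) P := by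
    intro N
    refine my_integrable_of_bdd (C := 2) (((hggm N).sub hmeas_h0).abs.aestronglyMeasurable) ?_
    filter_upwards [hggb N, hbd_h] with ω h1 h2
    rw [abs_abs]
    calc |gg N ω - h ω| ≤ |gg N ω| + |h ω| := abs_sub _ _
      _ ≤ 2 := by linarith
  have hsub_tendsto : Tendsto (fun j => ∫ ω, |gg (φ j) ω - h ω| ∂P) atTop (𝓝 0) := by
    have := tendsto_integral_of_dominated_convergence (μ := P)
      (F := fun j ω => |gg (φ j) ω - h ω|) (f := fun _ => 0) (fun _ => 2)
      (fun j => ((hggm (φ j)).sub hmeas_h0).abs.aestronglyMeasurable) (integrable_const 2)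
      (fun j => by
        filter_upwards [hggb (φ j), hbd_h] with ω h1 h2
        rw [Real.norm_eq_abs, abs_abs]
        calc |gg (φ j) ω - h ω| ≤ |gg (φ j) ω| + |h ω| := abs_sub _ _
          _ ≤ 2 := by linarith)
      (by
        filter_upwards [hconv_ae] with ω h1
        simpa [Function.comp_def] using ((continuous_abs.tendsto _).comp (h1.sub_const (h ω))))
    simpa using this
  -- final squeeze
  rw [Metric.tendsto_atTop]
  intro ε hε
  obtain ⟨j₁, hj₁⟩ : ∃ j₁, (2:ℝ)⁻¹^j₁ < ε/4 :=
    exists_pow_lt_of_lt_one (by linarith) (by norm_num)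
  obtain ⟨j₂, hj₂⟩ := (Metric.tendsto_atTop.1 hsub_tendsto) (ε/4) (by linarith)
  set j := max j₁ j₂ with hj
  refine ⟨φ j, fun N hN => ?_⟩
  have hWeq : ∫ ω, |gg N ω - (P[g|⨅ M, m M]) ω| ∂P = ∫ ω, |gg N ω - h ω| ∂P := by
    refine integral_congr_ae ?_
    filter_upwards [hW] with ω hω
    rw [hω]
  have htri : ∫ ω, |gg N ω - h ω| ∂P
      ≤ (∫ ω, |gg N ω - gg (φ j) ω| ∂P) + ∫ ω, |gg (φ j) ω - h ω| ∂P := by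
    rw [← integral_add (hdiffint N (φ j)) (hgg_h_int (φ j))]
    refine integral_mono (hgg_h_int N)
      ((hdiffint N (φ j)).add (hgg_h_int (φ j))) fun ω => ?_
    calc |gg N ω - h ω| ≤ |gg N ω - gg (φ j) ω| + |gg (φ j) ω - h ω| := abs_sub_le _ _ _
      _ = _ := rfl
  have hb1 : ∫ ω, |gg N ω - gg (φ j) ω| ∂P ≤ (2:ℝ)⁻¹^j₁ := by
    refine le_trans (hφbound j N (φ j) hN le_rfl) ?_
    exact pow_le_pow_of_le_one (by norm_num) (by norm_num) (le_max_left _ _)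
  have hb2 : ∫ ω, |gg (φ j) ω - h ω| ∂P < ε/4 := by
    have := hj₂ j (le_max_right _ _)
    rwa [Real.dist_eq, sub_zero, abs_of_nonneg (integral_nonneg fun ω => abs_nonneg _)] at this
  have hnon : 0 ≤ ∫ ω, |gg N ω - (P[g|⨅ M, m M]) ω| ∂P := integral_nonneg fun ω => abs_nonneg _
  rw [Real.dist_eq, sub_zero, abs_of_nonneg hnon, hWeq]
  calc ∫ ω, |gg N ω - h ω| ∂P ≤ _ + _ := htri
    _ < ε/4 + ε/4 := by
        have := hb1.trans_lt hj₁
        linarith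
    _ < ε := by linarith

end Levy

end AuxLevy

/-! ### index/permutation lemmas -/

section IdxLemmas
variable {k : ℕ} {V : Type*} [MeasurableSpace V]

lemma measurable_shiftMap (N : ℕ) :
    Measurable (fun ω : Idx k → V => fun J => ω (shiftIdx k N J)) :=
  measurable_pi_lambda _ fun J => measurable_pi_apply _

lemma tailSigmaN_le (N : ℕ) : tailSigmaN k V N ≤ MeasurableSpace.pi :=
  measurable_iff_comap_le.1 (measurable_shiftMap N)

lemma shiftIdx_comp (M N : ℕ) (J : Idx k) :
    shiftIdx k M (shiftIdx k N J) = shiftIdx k (N + M) J := by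
  apply Subtype.ext
  show ((J.1.image (· + N)).image (· + M)) = J.1.image (· + (N + M))
  rw [Finset.image_image]
  apply Finset.image_congr
  intro x _
  simp [Function.comp, add_assoc]

lemma tailSigmaN_mono {M N : ℕ} (h : M ≤ N) : tailSigmaN k V N ≤ tailSigmaN k V M := by
  have hcomp : (fun ω : Idx k → V => fun J => ω (shiftIdx k N J))
      = (fun ω' : Idx k → V => fun J => ω' (shiftIdx k (N - M) J))
        ∘ (fun ω : Idx k → V => fun J => ω (shiftIdx k M J)) := by
    funext ω J
    simp only [Function.comp_apply]
    rw [shiftIdx_comp]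
    congr 2
    omega
  rw [tailSigmaN, hcomp, ← MeasurableSpace.comap_comp]
  exact MeasurableSpace.comap_mono (measurable_iff_comap_le.1 (measurable_shiftMap (N - M)))

lemma tailSigma_le : tailSigma k V ≤ MeasurableSpace.pi :=
  (iInf_le _ 0).trans (tailSigmaN_le 1)

lemma measurable_coord_tail (N : ℕ) (K : Idx k) (hK : ∀ x ∈ K.1, N ≤ x) :
    Measurable[tailSigmaN k V N] fun ω : Idx k → V => ω K := by
  have hne : (K.1.image (· - N)).Nonempty := K.2.1.image _
  have hcard : (K.1.image (· - N)).card ≤ k :=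
    le_trans (Finset.card_image_le) K.2.2
  set K' : Idx k := ⟨K.1.image (· - N), hne, hcard⟩ with hK'
  have heq : shiftIdx k N K' = K := by
    apply Subtype.ext
    show (K.1.image (· - N)).image (· + N) = K.1
    rw [Finset.image_image]
    ext x
    simp only [Finset.mem_image, Function.comp_apply]
    constructor
    · rintro ⟨y, hy, rfl⟩
      have := hK y hy
      have : y - N + N = y := by omega
      rwa [this]
    · intro hx
      exact ⟨x, hx, by have := hK x hx; omega⟩
  have hfun : (fun ω : Idx k → V => ω K)
      = (fun ω' : Idx k → V => ω' K') ∘ (fun ω : Idx k → V => fun J => ω (shiftIdx k N J)) := by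
    funext ω
    simp only [Function.comp_apply]
    rw [heq]
  rw [hfun]
  exact (measurable_pi_apply K').comp (measurable_iff_comap_le.2 le_rfl)

lemma measurable_permAct (τ : Equiv.Perm ℕ) : Measurable (permAct k V τ) :=
  measurable_pi_lambda _ fun J => measurable_pi_apply _

lemma permIdx_fix (τ : Equiv.Perm ℕ) (K : Idx k) (hfix : ∀ x ∈ K.1, τ x = x) :
    permIdx k τ K = K := by
  apply Subtype.ext
  show K.1.image τ = K.1
  rw [Finset.image_congr (g := id) (fun x hx => hfix x hx), Finset.image_id]

end IdxLemmas

/-! ### block swap permutation -/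

def blockSwapFun (a b N x : ℕ) : ℕ :=
  if a < x ∧ x ≤ b then x + N else if a + N < x ∧ x ≤ b + N then x - N else x

def blockSwap (a b N : ℕ) (hab : b ≤ a + N) : Equiv.Perm ℕ where
  toFun := blockSwapFun a b N
  invFun := blockSwapFun a b N
  left_inv := by intro x; unfold blockSwapFun; split_ifs <;> omega
  right_inv := by intro x; unfold blockSwapFun; split_ifs <;> omega

variable {a b N : ℕ} {hab : b ≤ a + N}

lemma blockSwap_apply (x : ℕ) : blockSwap a b N hab x = blockSwapFun a b N x := rfl

lemma blockSwap_low {x : ℕ} (hx : x ≤ a) : blockSwap a b N hab x = x := by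
  rw [blockSwap_apply]; unfold blockSwapFun; split_ifs <;> omega

lemma blockSwap_mid {x : ℕ} (h1 : a < x) (h2 : x ≤ b) : blockSwap a b N hab x = x + N := by
  rw [blockSwap_apply]; unfold blockSwapFun; split_ifs <;> omega

lemma blockSwap_high {x : ℕ} (hx : b + N < x) : blockSwap a b N hab x = x := by
  rw [blockSwap_apply]; unfold blockSwapFun; split_ifs <;> omega

lemma blockSwap_finite : {x | blockSwap a b N hab x ≠ x}.Finite := by
  refine Set.Finite.subset (Set.finite_Iic (b + N)) ?_
  intro x hx
  simp only [Set.mem_setOf_eq] at hx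
  by_contra hgt
  simp only [Set.mem_Iic, not_le] at hgt
  exact hx (blockSwap_high hgt)


/-! ### invariance and transport -/

section Main
variable {k : ℕ} {V : Type*} [MeasurableSpace V]

lemma mem_of_permAct_mem {τ : Equiv.Perm ℕ} {M : ℕ} {s : Set (Idx k → V)}
    (hs : MeasurableSet[tailSigmaN k V M] s) (hfix : ∀ x, M ≤ x → τ x = x)
    (ω : Idx k → V) : permAct k V τ ω ∈ s ↔ ω ∈ s := by
  obtain ⟨t, -, rfl⟩ := hs
  simp only [Set.mem_preimage]
  have hcoord : (fun J => permAct k V τ ω (shiftIdx k M J))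
      = fun J => ω (shiftIdx k M J) := by
    funext J'
    show ω (permIdx k τ (shiftIdx k M J')) = ω (shiftIdx k M J')
    rw [permIdx_fix]
    intro x hx
    simp only [shiftIdx, Finset.mem_image] at hx
    obtain ⟨y, -, rfl⟩ := hx
    exact hfix _ (Nat.le_add_left M y)
  rw [hcoord]

variable (P : Measure (Idx k → V)) [IsProbabilityMeasure P]

lemma integral_permAct (hP : IsExchangeable k P) (τ : Equiv.Perm ℕ)
    (hfin : {x | τ x ≠ x}.Finite) {F : (Idx k → V) → ℝ}
    (hF : AEStronglyMeasurable F P) :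
    ∫ ω, F ω ∂P = ∫ ω, F (permAct k V τ ω) ∂P := by
  conv_lhs => rw [← hP τ hfin]
  exact integral_map (measurable_permAct τ).aemeasurable (by rw [hP τ hfin]; exact hF)

end Main

section KeyStep
variable {k : ℕ} {V : Type*} [MeasurableSpace V]
  (P : Measure (Idx k → V)) [IsProbabilityMeasure P]

lemma key_step (hP : IsExchangeable k P)
    (j : ℕ → ℕ) (hmono : StrictMono j)
    (J : ℕ → Idx k) (hJ : ∀ l, (J l).1 = Finset.Ioc (j l) (j (l + 1)))
    (A : ℕ → Set V) (hA : ∀ l, MeasurableSet (A l)) (n : ℕ)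
    (F : ℕ → (Idx k → V) → ℝ)
    (hFdef : F = fun l ω => (A l).indicator (fun _ => (1:ℝ)) (ω (J l)))
    (g : ℕ → (Idx k → V) → ℝ)
    (hgdef : g = fun r ω => ∏ l ∈ Finset.range r, F l ω) :
    P[g n * F n | tailSigma k V]
      =ᵐ[P] P[g n | tailSigma k V] * P[F n | tailSigma k V] := by
  classical
  have h𝒢le : tailSigma k V ≤ (inferInstance : MeasurableSpace (Idx k → V)) := tailSigma_le
  have hJsub : ∀ l x, x ∈ (J l).1 → j l < x ∧ x ≤ j (l + 1) :=
    fun l x hx => Finset.mem_Ioc.1 (by rwa [hJ l] at hx)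
  -- basic properties of F and g
  have hFm : ∀ l, Measurable (F l) := fun l => by
    rw [hFdef]; exact (measurable_const.indicator (hA l)).comp (measurable_pi_apply (J l))
  have hF0 : ∀ l ω, 0 ≤ F l ω := fun l ω => by
    rw [hFdef]; exact Set.indicator_nonneg (fun _ _ => zero_le_one) _
  have hF1 : ∀ l ω, F l ω ≤ 1 := fun l ω => by
    rw [hFdef]
    by_cases h : ω (J l) ∈ A l
    · simp [Set.indicator_of_mem h]
    · simp [Set.indicator_of_notMem h]
  have hgm : ∀ r, Measurable (g r) := fun r => by
    rw [hgdef]; exact Finset.measurable_prod _ fun l _ => hFm l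
  have hg0 : ∀ r ω, 0 ≤ g r ω := fun r ω => by
    rw [hgdef]; exact Finset.prod_nonneg fun l _ => hF0 l ω
  have hg1 : ∀ r ω, g r ω ≤ 1 := fun r ω => by
    rw [hgdef]; exact Finset.prod_le_one (fun l _ => hF0 l ω) fun l _ => hF1 l ω
  -- integrability helper
  have hbint : ∀ {f : (Idx k → V) → ℝ}, AEStronglyMeasurable f P →
      (∀ᵐ ω ∂P, |f ω| ≤ 1) → Integrable f P := fun hf hb => my_integrable_of_bdd hf hb
  have hint_g : ∀ r, Integrable (g r) P := fun r =>
    hbint (hgm r).aestronglyMeasurable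
      (ae_of_all _ fun ω => abs_le.2 ⟨by linarith [hg0 r ω], hg1 r ω⟩)
  have hint_F : ∀ l, Integrable (F l) P := fun l =>
    hbint (hFm l).aestronglyMeasurable
      (ae_of_all _ fun ω => abs_le.2 ⟨by linarith [hF0 l ω], hF1 l ω⟩)
  -- the shifted indicator functions
  set t : ℕ → ℕ := fun N => N + j (n + 1) + 1 with ht
  have hab : ∀ N, j (n + 1) ≤ j n + t N := fun N => by simp only [ht]; omega
  set f' : ℕ → (Idx k → V) → ℝ :=
    fun N ω => (A n).indicator (fun _ => (1:ℝ)) (ω (shiftIdx k (t N) (J n))) with hf'd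
  have hf'mN : ∀ N, Measurable[tailSigmaN k V (t N + 1)] (f' N) := by
    intro N
    have hcoord : Measurable[tailSigmaN k V (t N + 1)]
        (fun ω : Idx k → V => ω (shiftIdx k (t N) (J n))) := by
      apply measurable_coord_tail
      intro x hx
      simp only [shiftIdx, Finset.mem_image] at hx
      obtain ⟨y, hy, rfl⟩ := hx
      have := (hJsub n y hy).1
      omega
    exact (measurable_const.indicator (hA n)).comp hcoord
  have hf'm : ∀ N, Measurable (f' N) := fun N =>
    (hf'mN N).mono (tailSigmaN_le _) le_rfl
  have hf'0 : ∀ N ω, 0 ≤ f' N ω := fun N ω =>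
    Set.indicator_nonneg (fun _ _ => zero_le_one) _
  have hf'1 : ∀ N ω, f' N ω ≤ 1 := fun N ω => by
    by_cases h : ω (shiftIdx k (t N) (J n)) ∈ A n
    · simp [f', Set.indicator_of_mem h]
    · simp [f', Set.indicator_of_notMem h]
  have hint_f' : ∀ N, Integrable (f' N) P := fun N =>
    hbint (hf'm N).aestronglyMeasurable
      (ae_of_all _ fun ω => abs_le.2 ⟨by linarith [hf'0 N ω], hf'1 N ω⟩)
  -- the block swap permutations
  set σ : ℕ → Equiv.Perm ℕ := fun N => blockSwap (j n) (j (n + 1)) (t N) (hab N) with hσ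
  -- transport along the permutation
  have htrans : ∀ (r : ℕ), r ≤ n → ∀ (s : Set (Idx k → V)), MeasurableSet[tailSigma k V] s →
      ∀ N, ∫ ω, g r ω * F n ω * s.indicator (fun _ => (1:ℝ)) ω ∂P
        = ∫ ω, g r ω * f' N ω * s.indicator (fun _ => (1:ℝ)) ω ∂P := by
    intro r hr s hs N
    have hsmeas : MeasurableSet s := h𝒢le s hs
    have hGsm : AEStronglyMeasurable
        (fun ω => g r ω * F n ω * s.indicator (fun _ => (1:ℝ)) ω) P :=
      (((hgm r).mul (hFm n)).mul (measurable_const.indicator hsmeas)).aestronglyMeasurable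
    rw [integral_permAct P hP (σ N) blockSwap_finite hGsm]
    refine integral_congr_ae (Eventually.of_forall fun ω => ?_)
    show g r (permAct k V (σ N) ω) * F n (permAct k V (σ N) ω)
        * s.indicator (fun _ => (1:ℝ)) (permAct k V (σ N) ω)
      = g r ω * f' N ω * s.indicator (fun _ => (1:ℝ)) ω
    have h1 : g r (permAct k V (σ N) ω) = g r ω := by
      simp only [hgdef]
      refine Finset.prod_congr rfl fun l hl => ?_
      rw [Finset.mem_range] at hl
      simp only [hFdef]
      have hfix : permAct k V (σ N) ω (J l) = ω (J l) := by
        show ω (permIdx k (σ N) (J l)) = ω (J l)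
        rw [permIdx_fix]
        intro x hx
        have hx' := hJsub l x hx
        have hln : j (l + 1) ≤ j n := hmono.monotone (by omega)
        exact blockSwap_low (by omega)
      rw [hfix]
    have h2 : F n (permAct k V (σ N) ω) = f' N ω := by
      simp only [hFdef, hf'd]
      have hswap : permAct k V (σ N) ω (J n) = ω (shiftIdx k (t N) (J n)) := by
        show ω (permIdx k (σ N) (J n)) = _
        congr 1
        apply Subtype.ext
        show (J n).1.image (σ N) = (J n).1.image (· + t N)
        apply Finset.image_congr
        intro x hx
        have hx' := hJsub n x hx
        exact blockSwap_mid hx'.1 hx'.2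
      rw [hswap]
    have h3 : s.indicator (fun _ => (1:ℝ)) (permAct k V (σ N) ω)
        = s.indicator (fun _ => (1:ℝ)) ω := by
      have hM : MeasurableSet[tailSigmaN k V (j (n + 1) + t N + 1)] s :=
        (MeasurableSpace.measurableSet_iInf.1 hs) (j (n + 1) + t N)
      have hmem := mem_of_permAct_mem hM
        (fun x hx => blockSwap_high (a := j n) (b := j (n + 1)) (N := t N)
          (hab := hab N) (by omega)) ω
      by_cases h : ω ∈ s
      · rw [Set.indicator_of_mem h, Set.indicator_of_mem (hmem.2 h)]
      · rw [Set.indicator_of_notMem h, Set.indicator_of_notMem fun hc => h (hmem.1 hc)]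
    rw [h1, h2, h3]
  -- indicator conversion helper
  have hindconv : ∀ (s : Set (Idx k → V)), MeasurableSet s → ∀ (u : (Idx k → V) → ℝ),
      ∫ ω in s, u ω ∂P = ∫ ω, u ω * s.indicator (fun _ => (1:ℝ)) ω ∂P := by
    intro s hsm u
    rw [← integral_indicator hsm]
    refine integral_congr_ae (Eventually.of_forall fun ω => ?_)
    by_cases h : ω ∈ s
    · simp [Set.indicator_of_mem h]
    · simp [Set.indicator_of_notMem h]
  -- bounds on the conditional expectations
  have hWb : ∀ᵐ ω ∂P, 0 ≤ (P[g n|tailSigma k V]) ω ∧ (P[g n|tailSigma k V]) ω ≤ 1 :=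
    condexp_bdd01 P (hgm n) (hg0 n) (hg1 n) _ h𝒢le
  have hZb : ∀ᵐ ω ∂P, 0 ≤ (P[F n|tailSigma k V]) ω ∧ (P[F n|tailSigma k V]) ω ≤ 1 :=
    condexp_bdd01 P (hFm n) (hF0 n) (hF1 n) _ h𝒢le
  -- the conditional expectation of the moved block equals that of the original
  have hZf' : ∀ N, P[F n|tailSigma k V] =ᵐ[P] P[f' N|tailSigma k V] := by
    intro N
    refine ae_eq_condExp_of_forall_setIntegral_eq h𝒢le (hint_f' N)
      (fun s hs _ => integrable_condExp.integrableOn) (fun s hs _ => ?_)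
      (stronglyMeasurable_condExp.aestronglyMeasurable)
    have hsm : MeasurableSet s := h𝒢le s hs
    have e1 : ∫ ω in s, (P[F n|tailSigma k V]) ω ∂P = ∫ ω in s, F n ω ∂P :=
      setIntegral_condExp h𝒢le (hint_F n) hs
    have hg0one : ∀ ω, g 0 ω = 1 := fun ω => by simp [hgdef]
    rw [e1, hindconv s hsm (F n), hindconv s hsm (f' N)]
    calc ∫ ω, F n ω * s.indicator (fun _ => (1:ℝ)) ω ∂P
        = ∫ ω, g 0 ω * F n ω * s.indicator (fun _ => (1:ℝ)) ω ∂P := by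
          refine integral_congr_ae (Eventually.of_forall fun ω => ?_)
          simp only [hg0one, one_mul]
      _ = ∫ ω, g 0 ω * f' N ω * s.indicator (fun _ => (1:ℝ)) ω ∂P :=
          htrans 0 (Nat.zero_le n) s hs N
      _ = ∫ ω, f' N ω * s.indicator (fun _ => (1:ℝ)) ω ∂P := by
          refine integral_congr_ae (Eventually.of_forall fun ω => ?_)
          simp only [hg0one, one_mul]
  -- measurability/integrability of the product of conditional expectations
  have hWZsm : StronglyMeasurable[tailSigma k V]
      (P[g n|tailSigma k V] * P[F n|tailSigma k V]) :=
    stronglyMeasurable_condExp.mul stronglyMeasurable_condExp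
  have hWZint : Integrable (P[g n|tailSigma k V] * P[F n|tailSigma k V]) P := by
    refine hbint ((hWZsm.mono h𝒢le).aestronglyMeasurable) ?_
    filter_upwards [hWb, hZb] with ω h1 h2
    rw [Pi.mul_apply, abs_mul]
    exact mul_le_one₀ (abs_le.2 ⟨by linarith [h1.1], h1.2⟩) (abs_nonneg _)
      (abs_le.2 ⟨by linarith [h2.1], h2.2⟩)
  have hgFint : Integrable (g n * F n) P := by
    refine hbint (((hgm n).mul (hFm n)).aestronglyMeasurable) (ae_of_all _ fun ω => ?_)
    rw [Pi.mul_apply, abs_mul]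
    exact mul_le_one₀ (abs_le.2 ⟨by linarith [hg0 n ω], hg1 n ω⟩) (abs_nonneg _)
      (abs_le.2 ⟨by linarith [hF0 n ω], hF1 n ω⟩)
  refine (ae_eq_condExp_of_forall_setIntegral_eq h𝒢le hgFint
    (fun s _ _ => hWZint.integrableOn) (fun s hs _ => ?_)
    (hWZsm.aestronglyMeasurable)).symm
  have hsm : MeasurableSet s := h𝒢le s hs
  set ind : (Idx k → V) → ℝ := s.indicator (fun _ => (1:ℝ)) with hind
  have hindm : Measurable ind := measurable_const.indicator hsm
  have hind0 : ∀ ω, 0 ≤ ind ω := fun ω => Set.indicator_nonneg (fun _ _ => zero_le_one) _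
  have hind1 : ∀ ω, ind ω ≤ 1 := fun ω => by
    by_cases h : ω ∈ s
    · simp [hind, Set.indicator_of_mem h]
    · simp [hind, Set.indicator_of_notMem h]
  -- the key estimate for every N
  have key_est : ∀ N, |(∫ ω in s, (g n * F n) ω ∂P)
        - ∫ ω in s, (P[g n|tailSigma k V] * P[F n|tailSigma k V]) ω ∂P|
      ≤ ∫ ω, |(P[g n|tailSigmaN k V (t N + 1)]) ω - (P[g n|tailSigma k V]) ω| ∂P := by
    intro N
    have hmNle : tailSigmaN k V (t N + 1) ≤ (inferInstance : MeasurableSpace (Idx k → V)) :=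
      tailSigmaN_le _
    have hsMN : MeasurableSet[tailSigmaN k V (t N + 1)] s :=
      (MeasurableSpace.measurableSet_iInf.1 hs) (t N)
    have hggb : ∀ᵐ ω ∂P, 0 ≤ (P[g n|tailSigmaN k V (t N + 1)]) ω
        ∧ (P[g n|tailSigmaN k V (t N + 1)]) ω ≤ 1 :=
      condexp_bdd01 P (hgm n) (hg0 n) (hg1 n) _ hmNle
    have hggm : Measurable (P[g n|tailSigmaN k V (t N + 1)]) :=
      (stronglyMeasurable_condExp.mono hmNle).measurable
    have hWm : Measurable (P[g n|tailSigma k V]) :=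
      (stronglyMeasurable_condExp.mono h𝒢le).measurable
    have hZm : Measurable (P[F n|tailSigma k V]) :=
      (stronglyMeasurable_condExp.mono h𝒢le).measurable
    -- ψ = moved block times indicator of s
    set ψ : (Idx k → V) → ℝ := fun ω => f' N ω * ind ω with hψ
    have hψsmN : StronglyMeasurable[tailSigmaN k V (t N + 1)] ψ :=
      ((hf'mN N).mul (measurable_const.indicator hsMN)).stronglyMeasurable
    have hψm : Measurable ψ := (hf'm N).mul hindm
    have hψb : ∀ ω, |ψ ω| ≤ 1 := fun ω => by
      show |f' N ω * ind ω| ≤ 1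
      rw [abs_mul]
      exact mul_le_one₀ (abs_le.2 ⟨by linarith [hf'0 N ω], hf'1 N ω⟩) (abs_nonneg _)
        (abs_le.2 ⟨by linarith [hind0 ω], hind1 ω⟩)
    have hint_ψg : Integrable (ψ * g n) P := by
      refine hbint ((hψm.mul (hgm n)).aestronglyMeasurable) (ae_of_all _ fun ω => ?_)
      rw [Pi.mul_apply, abs_mul]
      exact mul_le_one₀ (hψb ω) (abs_nonneg _)
        (abs_le.2 ⟨by linarith [hg0 n ω], hg1 n ω⟩)
    -- first chain: ∫_s g n * F n = ∫ ψ * condexp at level t N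
    have chain1 : ∫ ω in s, (g n * F n) ω ∂P
        = ∫ ω, ψ ω * (P[g n|tailSigmaN k V (t N + 1)]) ω ∂P := by
      calc ∫ ω in s, (g n * F n) ω ∂P
          = ∫ ω, (g n * F n) ω * ind ω ∂P := hindconv s hsm _
        _ = ∫ ω, g n ω * F n ω * ind ω ∂P := by
            refine integral_congr_ae (Eventually.of_forall fun ω => ?_)
            simp only [Pi.mul_apply]
        _ = ∫ ω, g n ω * f' N ω * ind ω ∂P := htrans n le_rfl s hs N
        _ = ∫ ω, (ψ * g n) ω ∂P := by
            refine integral_congr_ae (Eventually.of_forall fun ω => ?_)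
            show g n ω * f' N ω * ind ω = f' N ω * ind ω * g n ω
            ring
        _ = ∫ ω, (P[ψ * g n|tailSigmaN k V (t N + 1)]) ω ∂P :=
            (integral_condExp hmNle).symm
        _ = ∫ ω, (ψ * P[g n|tailSigmaN k V (t N + 1)]) ω ∂P :=
            integral_congr_ae (condExp_mul_of_stronglyMeasurable_left hψsmN hint_ψg (hint_g n))
        _ = ∫ ω, ψ ω * (P[g n|tailSigmaN k V (t N + 1)]) ω ∂P := by
            refine integral_congr_ae (Eventually.of_forall fun ω => ?_)
            rw [Pi.mul_apply]
    -- second chain: ∫ ψ * W = ∫_s W * Z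
    set χ : (Idx k → V) → ℝ := fun ω => (P[g n|tailSigma k V]) ω * ind ω with hχ
    have hχsm : StronglyMeasurable[tailSigma k V] χ :=
      stronglyMeasurable_condExp.mul (stronglyMeasurable_const.indicator hs)
    have hχb : ∀ᵐ ω ∂P, |χ ω| ≤ 1 := by
      filter_upwards [hWb] with ω h1
      show |(P[g n|tailSigma k V]) ω * ind ω| ≤ 1
      rw [abs_mul]
      exact mul_le_one₀ (abs_le.2 ⟨by linarith [h1.1], h1.2⟩) (abs_nonneg _)
        (abs_le.2 ⟨by linarith [hind0 ω], hind1 ω⟩)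
    have hint_χf' : Integrable (χ * f' N) P := by
      refine hbint (((hWm.mul hindm).mul (hf'm N)).aestronglyMeasurable) ?_
      filter_upwards [hχb] with ω h1
      rw [Pi.mul_apply, abs_mul]
      exact mul_le_one₀ h1 (abs_nonneg _)
        (abs_le.2 ⟨by linarith [hf'0 N ω], hf'1 N ω⟩)
    have chain2 : ∫ ω, ψ ω * (P[g n|tailSigma k V]) ω ∂P
        = ∫ ω in s, (P[g n|tailSigma k V] * P[F n|tailSigma k V]) ω ∂P := by
      calc ∫ ω, ψ ω * (P[g n|tailSigma k V]) ω ∂P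
          = ∫ ω, (χ * f' N) ω ∂P := by
            refine integral_congr_ae (Eventually.of_forall fun ω => ?_)
            show f' N ω * ind ω * (P[g n|tailSigma k V]) ω
              = (P[g n|tailSigma k V]) ω * ind ω * f' N ω
            ring
        _ = ∫ ω, (P[χ * f' N|tailSigma k V]) ω ∂P := (integral_condExp h𝒢le).symm
        _ = ∫ ω, (χ * P[f' N|tailSigma k V]) ω ∂P :=
            integral_congr_ae (condExp_mul_of_stronglyMeasurable_left hχsm hint_χf' (hint_f' N))
        _ = ∫ ω, (χ * P[F n|tailSigma k V]) ω ∂P := by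
            refine integral_congr_ae ?_
            filter_upwards [hZf' N] with ω hω
            rw [Pi.mul_apply, Pi.mul_apply, hω]
        _ = ∫ ω, (P[g n|tailSigma k V] * P[F n|tailSigma k V]) ω * ind ω ∂P := by
            refine integral_congr_ae (Eventually.of_forall fun ω => ?_)
            show (P[g n|tailSigma k V]) ω * ind ω * (P[F n|tailSigma k V]) ω
              = (P[g n|tailSigma k V]) ω * (P[F n|tailSigma k V]) ω * ind ω
            ring
        _ = ∫ ω in s, (P[g n|tailSigma k V] * P[F n|tailSigma k V]) ω ∂P :=
            (hindconv s hsm _).symm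
    -- integrability for the difference estimate
    have hint_ψgg : Integrable (fun ω => ψ ω * (P[g n|tailSigmaN k V (t N + 1)]) ω) P := by
      refine hbint ((hψm.mul hggm).aestronglyMeasurable) ?_
      filter_upwards [hggb] with ω h1
      rw [abs_mul]
      exact mul_le_one₀ (hψb ω) (abs_nonneg _) (abs_le.2 ⟨by linarith [h1.1], h1.2⟩)
    have hint_ψW : Integrable (fun ω => ψ ω * (P[g n|tailSigma k V]) ω) P := by
      refine hbint ((hψm.mul hWm).aestronglyMeasurable) ?_
      filter_upwards [hWb] with ω h1
      rw [abs_mul]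
      exact mul_le_one₀ (hψb ω) (abs_nonneg _) (abs_le.2 ⟨by linarith [h1.1], h1.2⟩)
    have hint_absdiff : Integrable
        (fun ω => |(P[g n|tailSigmaN k V (t N + 1)]) ω - (P[g n|tailSigma k V]) ω|) P := by
      refine my_integrable_of_bdd (C := 2) ((hggm.sub hWm).abs.aestronglyMeasurable) ?_
      filter_upwards [hggb, hWb] with ω h1 h2
      rw [abs_abs]
      calc |(P[g n|tailSigmaN k V (t N + 1)]) ω - (P[g n|tailSigma k V]) ω|
          ≤ |(P[g n|tailSigmaN k V (t N + 1)]) ω| + |(P[g n|tailSigma k V]) ω| := abs_sub _ _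
        _ ≤ 1 + 1 := add_le_add (abs_le.2 ⟨by linarith [h1.1], h1.2⟩)
            (abs_le.2 ⟨by linarith [h2.1], h2.2⟩)
        _ = 2 := by norm_num
    -- the difference of the two integrals
    have hdiff : (∫ ω in s, (g n * F n) ω ∂P)
        - (∫ ω in s, (P[g n|tailSigma k V] * P[F n|tailSigma k V]) ω ∂P)
        = ∫ ω, ψ ω * ((P[g n|tailSigmaN k V (t N + 1)]) ω - (P[g n|tailSigma k V]) ω) ∂P := by
      rw [chain1, ← chain2, ← integral_sub hint_ψgg hint_ψW]
      refine integral_congr_ae (Eventually.of_forall fun ω => ?_)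
      ring
    rw [hdiff]
    calc |∫ ω, ψ ω * ((P[g n|tailSigmaN k V (t N + 1)]) ω - (P[g n|tailSigma k V]) ω) ∂P|
        ≤ ∫ ω, |ψ ω| * |(P[g n|tailSigmaN k V (t N + 1)]) ω - (P[g n|tailSigma k V]) ω| ∂P := by
          simpa [Real.norm_eq_abs, abs_mul] using norm_integral_le_integral_norm
            (μ := P) (fun ω => ψ ω * ((P[g n|tailSigmaN k V (t N + 1)]) ω - (P[g n|tailSigma k V]) ω))
      _ ≤ ∫ ω, |(P[g n|tailSigmaN k V (t N + 1)]) ω - (P[g n|tailSigma k V]) ω| ∂P := by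
          refine integral_mono ?_ hint_absdiff fun ω => ?_
          · refine my_integrable_of_bdd (C := 2)
              ((hψm.abs.mul (hggm.sub hWm).abs).aestronglyMeasurable) ?_
            filter_upwards [hggb, hWb] with ω h1 h2
            rw [abs_mul, abs_abs, abs_abs]
            calc |ψ ω| * |(P[g n|tailSigmaN k V (t N + 1)]) ω - (P[g n|tailSigma k V]) ω|
                ≤ 1 * (1 + 1) := by
                  refine mul_le_mul (hψb ω) ?_ (abs_nonneg _) zero_le_one
                  calc |(P[g n|tailSigmaN k V (t N + 1)]) ω - (P[g n|tailSigma k V]) ω|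
                      ≤ |(P[g n|tailSigmaN k V (t N + 1)]) ω| + |(P[g n|tailSigma k V]) ω| :=
                        abs_sub _ _
                    _ ≤ 1 + 1 := add_le_add (abs_le.2 ⟨by linarith [h1.1], h1.2⟩)
                        (abs_le.2 ⟨by linarith [h2.1], h2.2⟩)
              _ = 2 := by norm_num
          · exact mul_le_of_le_one_left (abs_nonneg _) (hψb ω)
  -- conclude by letting N → ∞
  have hlevy := levy_downward_L1 P (fun L => tailSigmaN k V (L + 1))
    (fun L => tailSigmaN_le _) (fun M N h => tailSigmaN_mono (by omega))
    (hgm n) (hg0 n) (hg1 n)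
  have hcomp : Tendsto (fun N => ∫ ω,
      |(P[g n|tailSigmaN k V (t N + 1)]) ω - (P[g n|tailSigma k V]) ω| ∂P) atTop (𝓝 0) := by
    have htt : Tendsto t atTop atTop :=
      tendsto_atTop_mono (fun N => by simp only [ht, id_eq]; omega) tendsto_id
    exact hlevy.comp htt
  have habs : |(∫ ω in s, (g n * F n) ω ∂P)
      - ∫ ω in s, (P[g n|tailSigma k V] * P[F n|tailSigma k V]) ω ∂P| ≤ 0 :=
    ge_of_tendsto hcomp (Eventually.of_forall key_est)
  have h0 : (∫ ω in s, (g n * F n) ω ∂P)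
      - (∫ ω in s, (P[g n|tailSigma k V] * P[F n|tailSigma k V]) ω ∂P) = 0 :=
    abs_eq_zero.1 (le_antisymm habs (abs_nonneg _))
  linarith


end KeyStep


/-- for an exchangeable array realized canonically, and consecutive blocks
`J_l = {j_{l-1}+1, …, j_l}` of lengths at most `k`, the random variables `X_{J_l}` are
conditionally independent given the tail σ-algebra `𝒢`. -/
theorem statement1 (k : ℕ) (V : Type*) [MeasurableSpace V] [StandardBorelSpace V]
    (P : Measure (Idx k → V)) [IsProbabilityMeasure P] (hP : IsExchangeable k P)
    (j : ℕ → ℕ) (hj0 : j 0 = 0) (hmono : StrictMono j) (hgap : ∀ l, j (l + 1) - j l ≤ k)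
    (J : ℕ → Idx k) (hJ : ∀ l, (J l).1 = Finset.Ioc (j l) (j (l + 1)))
    (n : ℕ) (hn : 1 ≤ n) (A : ℕ → Set V) (hA : ∀ l, MeasurableSet (A l)) :
    P[(fun ω => ∏ l ∈ Finset.range n, (A l).indicator (fun _ => (1 : ℝ)) (ω (J l))) |
        tailSigma k V]
      =ᵐ[P] fun ω => ∏ l ∈ Finset.range n,
        (P[(fun ω' => (A l).indicator (fun _ => (1 : ℝ)) (ω' (J l))) | tailSigma k V]) ω := by
  classical
  obtain ⟨F, hFdef⟩ : ∃ F : ℕ → (Idx k → V) → ℝ,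
      F = fun l ω => (A l).indicator (fun _ => (1:ℝ)) (ω (J l)) := ⟨_, rfl⟩
  obtain ⟨g, hgdef⟩ : ∃ g : ℕ → (Idx k → V) → ℝ,
      g = fun r ω => ∏ l ∈ Finset.range r, F l ω := ⟨_, rfl⟩
  have main : ∀ nn : ℕ, P[g nn|tailSigma k V]
      =ᵐ[P] fun ω => ∏ l ∈ Finset.range nn, (P[F l|tailSigma k V]) ω := by
    intro nn
    induction nn with
    | zero =>
      have h1 : g 0 = fun _ => (1:ℝ) := funext fun ω => by simp [hgdef]
      rw [h1, condExp_const tailSigma_le]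
      exact Eventually.of_forall fun ω => by simp
    | succ m ih =>
      have hsplit : g (m + 1) = g m * F m :=
        funext fun ω => by simp [hgdef, Finset.prod_range_succ]
      have hkey := key_step P hP j hmono J hJ A hA m F hFdef g hgdef
      calc P[g (m + 1)|tailSigma k V]
          = P[g m * F m|tailSigma k V] := by rw [hsplit]
        _ =ᵐ[P] P[g m|tailSigma k V] * P[F m|tailSigma k V] := hkey
        _ =ᵐ[P] fun ω => ∏ l ∈ Finset.range (m + 1), (P[F l|tailSigma k V]) ω := by
            filter_upwards [ih] with ω hω
            rw [Pi.mul_apply, hω, Finset.prod_range_succ]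
  have := main n
  rw [hgdef, hFdef] at this
  exact this

end
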